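/- Fix c ∈ [−1,1] and ω ∈ ℝ. Then, as h → 0⁺, (Q̂₁(hω; h) + ω² − (4 + 13c)ω⁶h⁴/(2880(2 − c)))/h⁶ converges to −(4 + 38c + c²)ω⁸/(64512(2 − c)²). -/

import Mathlib

open Filter Topology

/-- `Ω(θ) = −cos(θ/2)(16 − (7 + cos θ)c)`. -/
noncomputable def Om (c θ : ℝ) : ℝ :=
  -Real.cos (θ/2) * (16 - (7 + Real.cos θ)*c)

/-- `Δ(θ) = √(Ω(θ)² + 4c² sin⁶(θ/2))`. -/
noncomputable def Del (c θ : ℝ) : ℝ :=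
  Real.sqrt ((Om c θ)^2 + 4*c^2*(Real.sin (θ/2))^6)

/-- The principal symbol `Q̂₁(θ; h)`. -/
noncomputable def Qhat1 (c h θ : ℝ) : ℝ :=
  (2/(3*h^2)) * (-(15 + Real.cos θ) + (5 + 3*Real.cos θ)*c + Del c θ)

/-- The spurious symbol `Q̂₂(θ; h)`. -/
noncomputable def Qhat2 (c h θ : ℝ) : ℝ :=
  (2/(3*h^2)) * (-(15 + Real.cos θ) + (5 + 3*Real.cos θ)*c - Del c θ)

set_option maxHeartbeats 8000000

namespace QhatAux

/-- Degree-8 Taylor polynomial of `cos`. -/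
noncomputable def P8 (t : ℝ) : ℝ := 1 - t^2/2 + t^4/24 - t^6/720 + t^8/40320

/-- Normalized 8th-order remainder of `cos`. -/
noncomputable def rr (t : ℝ) : ℝ := (Real.cos t - P8 t)/t^8

lemma two_pow_le_fact (n : ℕ) : (2:ℕ)^n ≤ (2*n+10).factorial := by
  induction n with
  | zero => simp; exact Nat.one_le_iff_ne_zero.mpr (Nat.factorial_ne_zero 10)
  | succ n ih =>
      have h1 : 2*(n+1)+10 = (2*n+11)+1 := by omega
      rw [h1, Nat.factorial_succ, show 2*n+11 = (2*n+10)+1 from rfl, Nat.factorial_succ]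
      calc (2:ℕ)^(n+1) = 2 * 2^n := by ring
        _ ≤ 2 * (2*n+10).factorial := Nat.mul_le_mul_left 2 ih
        _ ≤ (2*n+11+1) * ((2*n+10+1) * (2*n+10).factorial) := by
            have h2 : 2 ≤ (2*n+11+1) * (2*n+10+1) := by nlinarith
            calc 2 * (2*n+10).factorial ≤ ((2*n+11+1) * (2*n+10+1)) * (2*n+10).factorial :=
                  Nat.mul_le_mul_right _ h2
              _ = (2*n+11+1) * ((2*n+10+1) * (2*n+10).factorial) := by ring

lemma cos_bound {t : ℝ} (ht : |t| ≤ 1) : |Real.cos t - P8 t| ≤ 2 * |t|^10 := by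
  set f : ℕ → ℝ := fun n => (-1)^n * t^(2*n) / (2*n).factorial with hf
  have h1 : HasSum f (Real.cos t) := Real.hasSum_cos t
  have hP : ∑ i ∈ Finset.range 5, f i = P8 t := by
    simp [hf, Finset.sum_range_succ, P8, Nat.factorial]
    norm_num
    ring
  have h2 : HasSum (fun n => f (n+5)) (Real.cos t - ∑ i ∈ Finset.range 5, f i) :=
    (hasSum_nat_add_iff' 5).mpr h1
  have hb : ∀ n : ℕ, |f (n+5)| ≤ |t|^10 * (1/2)^n := by
    intro n
    have he : f (n+5) = (-1)^(n+5) * t^(2*n+10) / ((2*n+10).factorial : ℝ) := by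
      simp only [hf, show 2*(n+5) = 2*n+10 from by ring]
    rw [he, abs_div, abs_mul, abs_pow, abs_pow, abs_neg, abs_one, one_pow, one_mul,
      Nat.abs_cast]
    have hA : |t|^(2*n+10) ≤ |t|^10 * 1 := by
      rw [mul_one]
      exact pow_le_pow_of_le_one (abs_nonneg t) ht (by omega)
    have hB : (2:ℝ)^n ≤ ((2*n+10).factorial : ℝ) := by
      exact_mod_cast two_pow_le_fact n
    have h2p : (0:ℝ) < 2^n := by positivity
    calc |t|^(2*n+10) / ((2*n+10).factorial : ℝ) ≤ (|t|^10 * 1) / (2:ℝ)^n :=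
          div_le_div₀ (by positivity) hA h2p hB
      _ = |t|^10 * (1/2)^n := by
          rw [mul_one, div_pow, one_pow, div_eq_mul_inv, div_eq_mul_inv, one_mul]
  have hsummB : Summable (fun n : ℕ => |t|^10 * (1/2)^n) :=
    summable_geometric_two.mul_left _
  have hsummf : Summable (fun n => |f (n+5)|) :=
    Summable.of_nonneg_of_le (fun n => abs_nonneg _) hb hsummB
  have h4 : Real.cos t - P8 t = ∑' n, f (n+5) := by rw [← hP]; exact h2.tsum_eq.symm
  calc |Real.cos t - P8 t| = |∑' n, f (n+5)| := by rw [h4]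
    _ ≤ ∑' n, |f (n+5)| := by
        have hs : Summable fun n => ‖f (n+5)‖ := by
          simpa [Real.norm_eq_abs] using hsummf
        simpa [Real.norm_eq_abs] using norm_tsum_le_tsum_norm hs
    _ ≤ ∑' n, |t|^10 * (1/2)^n := Summable.tsum_le_tsum hb hsummf hsummB
    _ = |t|^10 * 2 := by rw [tsum_mul_left, tsum_geometric_two]
    _ ≤ 2 * |t|^10 := by rw [mul_comm]

lemma rr_tendsto : Tendsto rr (𝓝[≠] (0:ℝ)) (𝓝 0) := by
  apply squeeze_zero_norm' (a := fun t => 2 * |t|^2)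
  · have h1 : ∀ᶠ t in 𝓝 (0:ℝ), |t| < 1 := by
      have := eventually_abs_sub_lt (0:ℝ) one_pos
      simpa using this
    filter_upwards [self_mem_nhdsWithin, h1.filter_mono nhdsWithin_le_nhds] with t ht h1t
    have hb := cos_bound (le_of_lt h1t)
    have htne : t ≠ 0 := ht
    have ht8 : (0:ℝ) < |t|^8 := by positivity
    rw [Real.norm_eq_abs, rr, abs_div, abs_pow]
    rw [div_le_iff₀ ht8]
    calc |Real.cos t - P8 t| ≤ 2 * |t|^10 := hb
      _ = 2 * |t|^2 * |t|^8 := by ring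
  · have : Tendsto (fun t : ℝ => 2 * |t|^2) (𝓝 0) (𝓝 (2 * |(0:ℝ)|^2)) :=
      tendsto_const_nhds.mul ((continuous_abs.tendsto 0).pow 2)
    simpa using this.mono_left nhdsWithin_le_nhds

lemma rr_comp {a : ℝ} (ha : a ≠ 0) :
    Tendsto (fun h : ℝ => rr (a*h)) (𝓝[>] (0:ℝ)) (𝓝 0) := by
  apply rr_tendsto.comp
  rw [tendsto_nhdsWithin_iff]
  constructor
  · have : Tendsto (fun h : ℝ => a*h) (𝓝 0) (𝓝 (a*0)) :=
      (continuous_const.mul continuous_id).tendsto 0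
    simpa using this.mono_left nhdsWithin_le_nhds
  · filter_upwards [self_mem_nhdsWithin] with h hh
    exact mul_ne_zero ha (ne_of_gt hh)

/-- Numerator of the degree-4 Taylor polynomial (in `u`) of `√R(u)`. -/
@[irreducible] noncomputable def NumS (c u : ℝ) : ℝ :=
  8*(2-c)^2*(16-8*c) + 8*(2-c)^2*(6*c-8)*u - 16*(2-c)^2*u^2
    + 4*(2-c)*(3*c-4)*u^3 - (20-26*c+9*c^2)*u^4

/-- The degree-4 Taylor polynomial (in `u`) of `√R(u)`. -/
noncomputable def Spoly (c u : ℝ) : ℝ := NumS c u / (8*(2-c)^2)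

/-- Numerator of the cofactor polynomial. -/
@[irreducible] noncomputable def NumT (c u : ℝ) : ℝ :=
  -(32*(2-c)^2*(112-204*c+126*c^2-27*c^3))
    - 16*(2-c)^2*(56-76*c+27*c^2)*u
    - 8*(2-c)*(80-164*c+114*c^2-27*c^3)*u^2
    - (400-1040*c+1036*c^2-468*c^3+81*c^4)*u^3

/-- The cofactor polynomial: `R(u) − Spoly(u)² = u⁵ · Tpoly(u)`. -/
noncomputable def Tpoly (c u : ℝ) : ℝ := NumT c u / (64*(2-c)^4)

/-- Auxiliary factor: `u = (1−cos θ)/2 = θ² · gfun θ`. -/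
noncomputable def gfun (t : ℝ) : ℝ :=
  1/4 - t^2/48 + t^4/1440 - t^6/80640 - t^6 * rr t / 2

/-- Numerator of the explicit remainder polynomial. -/
@[irreducible] noncomputable def NumRf (c t r : ℝ) : ℝ :=
   ((829/725760)*t^2 + (-1081/725760)*c*t^2 + (103/181440)*c^2*t^2 + (-22709/87091200)*t^4 + (59533/174182400)*c*t^4 + (-42809/348364800)*c^2*t^4 + (41/1360800)*t^6 + (-857/21772800)*c*t^6 + (151/10886400)*c^2*t^6 + (-44641/19508428800)*t^8 + (23273/7803371520)*c*t^8 + (-16253/15606743040)*c^2*t^8 + (110351/877879296000)*t^10 + (-28727/175575859200)*c*t^10 + (8321/146313216000)*c^2*t^10 + (-36629/7023034368000)*t^12 + (95287/14046068736000)*c*t^12 + (-1049/445906944000)*c^2*t^12 + (7009/42138206208000)*t^14 + (-18227/84276412416000)*c*t^14 + (1403/18728091648000)*c^2*t^14 + (-28853/7079218642944000)*t^16 + (375107/70792186429440000)*c*t^16 + (-28859/15731596984320000)*c^2*t^16 + (1067/14158437285888000)*t^18 + (-13871/141584372858880000)*c*t^18 + (1067/31463193968640000)*c^2*t^18 + (-19/18877916381184000)*t^20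 + (247/188779163811840000)*c*t^20 + (-19/41950925291520000)*c^2*t^20 + (1/113267498287104000)*t^22 + (-13/1132674982871040000)*c*t^22 + (1/251705551749120000)*c^2*t^22 + (-1/25371919616311296000)*t^24 + (13/253719196163112960000)*c*t^24 + (-1/56382043591802880000)*c^2*t^24
    + 8*r + (-8)*c*r + 2*c^2*r + (4/3)*t^2*r + (-4/3)*c*t^2*r + (1/3)*c^2*t^2*r + (5/36)*t^4*r + (-29/144)*c*t^4*r + (19/288)*c^2*t^4*r + (61/4320)*t^6*r + (-167/8640)*c*t^6*r + (151/17280)*c^2*t^6*r + (-241/24192)*t^8*r + (1583/120960)*c*t^8*r + (-569/120960)*c^2*t^8*r + (667/483840)*t^10*r + (-1741/967680)*c*t^10*r + (407/645120)*c^2*t^10*r + (-257/2419200)*t^12*r + (803/5806080)*c*t^12*r + (-133/2764800)*c^2*t^12*r + (79/14515200)*t^14*r + (-137/19353600)*c*t^14*r + (19/7741440)*c^2*t^14*r + (-1919/9754214400)*t^16*r + (499/1950842880)*c*t^16*r + (-1/11289600)*c^2*t^16*r + (1787/351151718400)*t^18*r + (-23231/3511517184000)*c*t^18*r + (1787/780337152000)*c^2*t^18*r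 + (-43/468202291200)*t^20*r + (559/4682022912000)*c*t^20*r + (-43/1040449536000)*c^2*t^20*r + (1/936404582400)*t^22*r + (-13/9364045824000)*c*t^22*r + (1/2080899072000)*c^2*t^22*r + (-1/157315969843200)*t^24*r + (13/1573159698432000)*c*t^24*r + (-1/349591044096000)*c^2*t^24*r
    + (-4/3)*t^8*r^2 + (4/3)*c*t^8*r^2 + (-1/3)*c^2*t^8*r^2 + (-1/2)*t^10*r^2 + (5/8)*c*t^10*r^2 + (-3/16)*c^2*t^10*r^2 + (-11/96)*t^12*r^2 + (29/192)*c*t^12*r^2 + (-7/128)*c^2*t^12*r^2 + (71/2880)*t^14*r^2 + (-37/1152)*c*t^14*r^2 + (43/3840)*c^2*t^14*r^2 + (-311/161280)*t^16*r^2 + (809/322560)*c*t^16*r^2 + (-187/215040)*c^2*t^16*r^2 + (17/193536)*t^18*r^2 + (-221/1935360)*c*t^18*r^2 + (17/430080)*c^2*t^18*r^2 + (-29/11612160)*t^20*r^2 + (377/116121600)*c*t^20*r^2 + (-29/25804800)*c^2*t^20*r^2 + (1/23224320)*t^22*r^2 + (-13/232243200)*c*t^22*r^2 + (1/51609600)*c^2*t^22*r^2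 + (-1/2601123840)*t^24*r^2 + (13/26011238400)*c*t^24*r^2 + (-1/5780275200)*c^2*t^24*r^2
    + (1/3)*t^16*r^3 + (-5/12)*c*t^16*r^3 + (1/8)*c^2*t^16*r^3 + (5/24)*t^18*r^3 + (-13/48)*c*t^18*r^3 + (3/32)*c^2*t^18*r^3 + (-5/288)*t^20*r^3 + (13/576)*c*t^20*r^3 + (-1/128)*c^2*t^20*r^3 + (1/1728)*t^22*r^3 + (-13/17280)*c*t^22*r^3 + (1/3840)*c^2*t^22*r^3 + (-1/96768)*t^24*r^3 + (13/967680)*c*t^24*r^3 + (-1/215040)*c^2*t^24*r^3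
    + (-5/48)*t^24*r^4 + (13/96)*c*t^24*r^4 + (-3/64)*c^2*t^24*r^4)

/-- The explicit remainder polynomial. -/
@[irreducible] noncomputable def Rf (c t r : ℝ) : ℝ := NumRf c t r / (2-c)^2

lemma struct (c θ : ℝ) (hc : (2:ℝ) - c ≠ 0) :
    Om c θ^2 + 4*c^2*Real.sin (θ/2)^6
      = Spoly c ((1-Real.cos θ)/2)^2 + ((1-Real.cos θ)/2)^5 * Tpoly c ((1-Real.cos θ)/2) := by
  have hcos : Real.cos (θ/2)^2 = (1+Real.cos θ)/2 := by
    rw [Real.cos_sq, show 2*(θ/2) = θ by ring]; ring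
  have h1 : Om c θ^2 = Real.cos (θ/2)^2 * (16-(7+Real.cos θ)*c)^2 := by
    simp only [Om]; ring
  have h2 : Real.sin (θ/2)^6 = ((1-Real.cos θ)/2)^3 := by
    rw [show Real.sin (θ/2)^6 = (Real.sin (θ/2)^2)^3 by ring, Real.sin_sq, hcos]; ring
  rw [h1, hcos, h2]
  simp only [Spoly, Tpoly, NumS, NumT]
  field_simp
  ring

lemma u_eq (t : ℝ) (ht : t ≠ 0) : (1-Real.cos t)/2 = t^2 * gfun t := by
  simp only [gfun, rr, P8]
  field_simp
  ring

lemma cos_eq (t : ℝ) (ht : t ≠ 0) : Real.cos t = P8 t + t^8 * rr t := by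
  simp only [rr]
  field_simp
  ring

lemma mainIdPoly (c t r : ℝ) :
    8*(2-c)^2*(-(15+(P8 t + t^8*r)) + (5+3*(P8 t + t^8*r))*c) + NumS c ((1-(P8 t + t^8*r))/2)
      = -(12*(2-c)^2*t^2) + (2-c)*(4+13*c)/240*t^6 - (4+38*c+c^2)/5376*t^8
        + 12*t^8*NumRf c t r := by
  simp only [P8, NumS, NumRf]
  ring

end QhatAux

open QhatAux in
/-- Sixth-order expansion of the principal symbol: as `h → 0⁺`,
`(Q̂₁(hω; h) + ω² − (4 + 13c)ω⁶h⁴/(2880(2 − c)))/h⁶ → −(4 + 38c + c²)ω⁸/(64512(2 − c)²)`. -/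
theorem Qhat1_sixth_order (c : ℝ) (hc : c ∈ Set.Icc (-1 : ℝ) 1) (ω : ℝ) :
    Tendsto
      (fun h : ℝ =>
        (Qhat1 c h (h*ω) + ω^2 - (4 + 13*c)*ω^6*h^4/(2880*(2 - c)))/h^6)
      (𝓝[>] 0)
      (𝓝 (-(4 + 38*c + c^2)*ω^8/(64512*(2 - c)^2))) := by
  obtain ⟨hcm, hc1⟩ := hc
  have h2c : (0:ℝ) < 2 - c := by linarith
  have hc2 : (2:ℝ) - c ≠ 0 := ne_of_gt h2c
  have h16 : (0:ℝ) < 16 - 8*c := by linarith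
  have hDel0 : Del c 0 = 16 - 8*c := by
    simp only [Del, Om]
    norm_num
    rw [show (8*c - 16)^2 = (16-8*c)^2 by ring]
    exact Real.sqrt_sq h16.le
  rcases eq_or_ne ω 0 with hω | hω
  · -- trivial case ω = 0
    subst hω
    have hval : ∀ h : ℝ,
        (Qhat1 c h (h*0) + (0:ℝ)^2 - (4 + 13*c)*(0:ℝ)^6*h^4/(2880*(2 - c)))/h^6 = 0 := by
      intro h
      simp only [mul_zero, Qhat1, hDel0, Real.cos_zero]
      norm_num
    rw [show -(4 + 38*c + c^2)*(0:ℝ)^8/(64512*(2 - c)^2) = 0 by norm_num]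
    exact Tendsto.congr (fun h => (hval h).symm) tendsto_const_nhds
  · set l : Filter ℝ := 𝓝[>] (0:ℝ) with hl
    have hth : Tendsto (fun h : ℝ => h) l (𝓝 0) := tendsto_id.mono_left nhdsWithin_le_nhds
    have htθ : Tendsto (fun h : ℝ => h*ω) l (𝓝 0) := by
      simpa using hth.mul_const ω
    have t1 : Tendsto (fun h : ℝ => rr (h*ω)) l (𝓝 0) :=
      (rr_comp hω).congr (fun h => by rw [mul_comm])
    have tG : Tendsto (fun h : ℝ => gfun (h*ω)) l (𝓝 (1/4)) := by
      have hbig : Tendsto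
          (fun h : ℝ => 1/4 - (h*ω)^2/48 + (h*ω)^4/1440 - (h*ω)^6/80640 - (h*ω)^6 * rr (h*ω)/2)
          l (𝓝 (1/4 - (0:ℝ)^2/48 + (0:ℝ)^4/1440 - (0:ℝ)^6/80640 - (0:ℝ)^6 * 0/2)) :=
        ((((tendsto_const_nhds.sub ((htθ.pow 2).div_const 48)).add
          ((htθ.pow 4).div_const 1440)).sub ((htθ.pow 6).div_const 80640)).sub
          (((htθ.pow 6).mul t1).div_const 2))
      have heq : (1/4 - (0:ℝ)^2/48 + (0:ℝ)^4/1440 - (0:ℝ)^6/80640 - (0:ℝ)^6 * 0/2)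
          = (1/4 : ℝ) := by norm_num
      rw [heq] at hbig
      exact hbig.congr (fun h => by rw [gfun])
    have hucont : Continuous (fun h : ℝ => (1 - Real.cos (h*ω))/2) := by fun_prop
    have hu : Tendsto (fun h : ℝ => (1 - Real.cos (h*ω))/2) l (𝓝 0) := by
      have h1 : Tendsto (fun h : ℝ => (1 - Real.cos (h*ω))/2) l (𝓝 ((1 - Real.cos (0*ω))/2)) :=
        (hucont.tendsto 0).mono_left nhdsWithin_le_nhds
      have h2 : ((1 : ℝ) - Real.cos (0*ω))/2 = 0 := by
        rw [zero_mul, Real.cos_zero]; norm_num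
      rwa [h2] at h1
    have hScont : Continuous (fun u : ℝ => Spoly c u) := by
      unfold Spoly NumS; fun_prop
    have hTcont : Continuous (fun u : ℝ => Tpoly c u) := by
      unfold Tpoly NumT; fun_prop
    have tS : Tendsto (fun h : ℝ => Spoly c ((1 - Real.cos (h*ω))/2)) l (𝓝 (Spoly c 0)) :=
      (hScont.tendsto 0).comp hu
    have tT : Tendsto (fun h : ℝ => Tpoly c ((1 - Real.cos (h*ω))/2)) l (𝓝 (Tpoly c 0)) :=
      (hTcont.tendsto 0).comp hu
    have hS0 : Spoly c 0 = 16 - 8*c := by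
      simp only [Spoly, NumS]
      rw [div_eq_iff (by positivity : (8:ℝ)*(2-c)^2 ≠ 0)]
      ring
    have hSpos : ∀ᶠ h in l, 0 < Spoly c ((1 - Real.cos (h*ω))/2) := by
      apply tS.eventually (eventually_gt_nhds ?_)
      rw [hS0]; exact h16
    have hXcont : Continuous (fun h : ℝ => Del c (h*ω)) := by
      unfold Del Om
      fun_prop
    have tX : Tendsto (fun h : ℝ => Del c (h*ω)) l (𝓝 (16 - 8*c)) := by
      have h0 : Del c (0*ω) = 16 - 8*c := by rw [zero_mul, hDel0]
      have h1 : Tendsto (fun h : ℝ => Del c (h*ω)) l (𝓝 (Del c (0*ω))) :=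
        (hXcont.tendsto 0).mono_left nhdsWithin_le_nhds
      rwa [h0] at h1
    have tden : Tendsto (fun h : ℝ =>
        Del c (h*ω) + Spoly c ((1 - Real.cos (h*ω))/2)) l (𝓝 ((16-8*c) + Spoly c 0)) :=
      tX.add tS
    have hdenne : (16-8*c) + Spoly c 0 ≠ 0 := by
      rw [hS0]; linarith
    have tW : Tendsto (fun h : ℝ =>
        Tpoly c ((1 - Real.cos (h*ω))/2) /
          (Del c (h*ω) + Spoly c ((1 - Real.cos (h*ω))/2))) l
        (𝓝 (Tpoly c 0 / ((16-8*c) + Spoly c 0))) :=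
      tT.div tden hdenne
    set Φ : ℝ → ℝ := fun h =>
      -(4 + 38*c + c^2)*ω^8/(64512*(2 - c)^2)
      + ω^8 * Rf c (h*ω) (rr (h*ω))
      + 2/3*h^2*ω^10*(gfun (h*ω))^5 *
          (Tpoly c ((1 - Real.cos (h*ω))/2) /
            (Del c (h*ω) + Spoly c ((1 - Real.cos (h*ω))/2))) with hΦ
    have hRfcont : Continuous (fun p : ℝ × ℝ => Rf c p.1 p.2) := by
      unfold Rf NumRf; fun_prop
    have tRf : Tendsto (fun h : ℝ => Rf c (h*ω) (rr (h*ω))) l (𝓝 (Rf c 0 0)) := by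
      have hpair : Tendsto (fun h : ℝ => ((h*ω, rr (h*ω)) : ℝ × ℝ)) l (𝓝 (0, 0)) :=
        htθ.prodMk_nhds t1
      have h3 : Tendsto (fun p : ℝ × ℝ => Rf c p.1 p.2) (𝓝 ((0:ℝ),(0:ℝ))) (𝓝 (Rf c 0 0)) :=
        hRfcont.tendsto ((0:ℝ),(0:ℝ))
      exact h3.comp hpair
    have hRf0 : Rf c 0 0 = 0 := by
      simp only [Rf, NumRf]
      norm_num
    have tΦ : Tendsto Φ l (𝓝 (-(4 + 38*c + c^2)*ω^8/(64512*(2 - c)^2))) := by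
      have big : Tendsto Φ l (𝓝 (
          -(4 + 38*c + c^2)*ω^8/(64512*(2 - c)^2)
          + ω^8 * Rf c 0 0
          + 2/3*(0:ℝ)^2*ω^10*(1/4:ℝ)^5 * (Tpoly c 0 / ((16-8*c) + Spoly c 0)))) := by
        rw [hΦ]
        exact (tendsto_const_nhds.add (tendsto_const_nhds.mul tRf)).add
          (((((tendsto_const_nhds.mul (hth.pow 2)).mul tendsto_const_nhds).mul
            (tG.pow 5)).mul tW))
      have heq : (-(4 + 38*c + c^2)*ω^8/(64512*(2 - c)^2)
          + ω^8 * Rf c 0 0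
          + 2/3*(0:ℝ)^2*ω^10*(1/4:ℝ)^5 * (Tpoly c 0 / ((16-8*c) + Spoly c 0)))
          = -(4 + 38*c + c^2)*ω^8/(64512*(2 - c)^2) := by
        rw [hRf0]; ring
      rwa [heq] at big
    have hEΦ : ∀ᶠ h in l,
        (Qhat1 c h (h*ω) + ω^2 - (4 + 13*c)*ω^6*h^4/(2880*(2 - c)))/h^6 = Φ h := by
      filter_upwards [self_mem_nhdsWithin, hSpos] with h hh hSv
      have hhne : h ≠ 0 := ne_of_gt hh
      have hθ : h*ω ≠ 0 := mul_ne_zero hhne hω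
      have hstruct := struct c (h*ω) hc2
      have hD : Del c (h*ω) = Real.sqrt
          (Spoly c ((1-Real.cos (h*ω))/2)^2
            + ((1-Real.cos (h*ω))/2)^5 * Tpoly c ((1-Real.cos (h*ω))/2)) := by
        simp only [Del]
        rw [hstruct]
      have harg : 0 ≤ Spoly c ((1-Real.cos (h*ω))/2)^2
          + ((1-Real.cos (h*ω))/2)^5 * Tpoly c ((1-Real.cos (h*ω))/2) := by
        rw [← hstruct]; positivity
      have hDnn : 0 ≤ Del c (h*ω) := by rw [hD]; exact Real.sqrt_nonneg _
      have hD2 : Del c (h*ω)^2 = Spoly c ((1-Real.cos (h*ω))/2)^2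
          + ((1-Real.cos (h*ω))/2)^5 * Tpoly c ((1-Real.cos (h*ω))/2) := by
        rw [hD]; exact Real.sq_sqrt harg
      have hsumpos : 0 < Del c (h*ω) + Spoly c ((1-Real.cos (h*ω))/2) := by linarith
      have hsumne : Del c (h*ω) + Spoly c ((1-Real.cos (h*ω))/2) ≠ 0 := ne_of_gt hsumpos
      have hXdef : Del c (h*ω) = Spoly c ((1-Real.cos (h*ω))/2)
          + ((h*ω)^2 * gfun (h*ω))^5 *
            (Tpoly c ((1-Real.cos (h*ω))/2) /
              (Del c (h*ω) + Spoly c ((1-Real.cos (h*ω))/2))) := by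
        have key : ((h*ω)^2 * gfun (h*ω))^5 *
            (Tpoly c ((1-Real.cos (h*ω))/2) /
              (Del c (h*ω) + Spoly c ((1-Real.cos (h*ω))/2)))
            = Del c (h*ω) - Spoly c ((1-Real.cos (h*ω))/2) := by
          rw [← u_eq (h*ω) hθ, ← mul_div_assoc, div_eq_iff hsumne]
          linear_combination -hD2
        rw [key]
        ring
      have e0 : Qhat1 c h (h*ω) = 2/(3*h^2) *
          (-(15 + Real.cos (h*ω)) + (5 + 3*Real.cos (h*ω))*c + Del c (h*ω)) := rfl
      have hQ : Qhat1 c h (h*ω) = 2/(3*h^2) *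
          ((-(15 + Real.cos (h*ω)) + (5 + 3*Real.cos (h*ω))*c
              + Spoly c ((1-Real.cos (h*ω))/2))
            + ((h*ω)^2 * gfun (h*ω))^5 *
              (Tpoly c ((1-Real.cos (h*ω))/2) /
                (Del c (h*ω) + Spoly c ((1-Real.cos (h*ω))/2)))) := by
        rw [e0]
        conv_lhs => rw [hXdef]
        ring
      have hx := cos_eq (h*ω) hθ
      have hden8 : (8*(2-c)^2 : ℝ) ≠ 0 := by positivity
      have hMC : 8*(2-c)^2*(-(15 + Real.cos (h*ω)) + (5 + 3*Real.cos (h*ω))*c)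
          + NumS c ((1-Real.cos (h*ω))/2)
          = -(12*(2-c)^2*(h*ω)^2) + (2-c)*(4+13*c)/240*(h*ω)^6
            - (4+38*c+c^2)/5376*(h*ω)^8
            + 12*(h*ω)^8*NumRf c (h*ω) (rr (h*ω)) := by
        rw [hx]
        exact mainIdPoly c (h*ω) (rr (h*ω))
      have hcanc : NumS c ((1-Real.cos (h*ω))/2) / (8*(2-c)^2) * (8*(2-c)^2)
          = NumS c ((1-Real.cos (h*ω))/2) := div_mul_cancel₀ _ hden8
      have hMainDiv : -(15 + Real.cos (h*ω)) + (5 + 3*Real.cos (h*ω))*c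
          + Spoly c ((1-Real.cos (h*ω))/2)
          = (-(12*(2-c)^2*(h*ω)^2) + (2-c)*(4+13*c)/240*(h*ω)^6
              - (4+38*c+c^2)/5376*(h*ω)^8
              + 12*(h*ω)^8*NumRf c (h*ω) (rr (h*ω))) / (8*(2-c)^2) := by
        rw [show Spoly c ((1-Real.cos (h*ω))/2)
            = NumS c ((1-Real.cos (h*ω))/2) / (8*(2-c)^2) from rfl]
        rw [eq_div_iff hden8]
        linear_combination hMC + hcanc
      rw [hQ, hMainDiv]
      simp only [hΦ, Rf]
      field_simp
      ring
    exact Tendsto.congr' (by filter_upwards [hEΦ] with h e using e.symm) tΦ
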